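/- Let β ∈ (0,1], λ₁,…,λ_k > 0, λ = ∑_{j=1}^{k} λ_j, t ≥ 0, and u ∈ ℝ with |u| ≤ 1. Then E_{β,1}(-t^β·∑_{j=1}^{k} λ_j(1-u^j)) = ∑_{n=0}^{∞} u^n · ( ∑_{x ∈ Ω(k,n)} (∑_{j=1}^{k} x_j)!·E_{β, β∑_j x_j + 1}^{∑_j x_j + 1}(-λ t^β)·∏_{j=1}^{k} ((λ_j t^β)^{x_j}/x_j!) ), where Ω(k,n) = {x ∈ ℕ^k : ∑_j j x_j = n}, E_{β,1}(w) = ∑_{r≥0} w^r/Γ(βr+1), and E_{α,b}^{γ}(w) = ∑_{r≥0} (γ)_r w^r/(r! Γ(αr+b)) with (γ)_r the rising factorial. -/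

import Mathlib

open scoped BigOperators

/-- Two-parameter Mittag-Leffler function `E_{β,1}(w) = ∑_{r≥0} w^r/Γ(βr+1)`. -/
noncomputable def mittagLeffler (β w : ℝ) : ℝ :=
  ∑' r : ℕ, w ^ r / Real.Gamma (β * r + 1)

/-- Three-parameter Mittag-Leffler function
`E_{α,b}^{γ}(w) = ∑_{r≥0} (γ)_r w^r/(r! Γ(αr+b))` with rising factorial `(γ)_r`. -/
noncomputable def mittagLeffler3 (a b g w : ℝ) : ℝ :=
  ∑' r : ℕ, (∏ i ∈ Finset.range r, (g + i)) * w ^ r /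
      ((Nat.factorial r : ℝ) * Real.Gamma (a * r + b))

private lemma prod_asc (m : ℕ) : ∀ r : ℕ,
    (∏ i ∈ Finset.range r, ((m : ℝ) + 1 + i)) * (Nat.factorial m : ℝ)
      = (Nat.factorial (m + r) : ℝ)
  | 0 => by simp
  | (r + 1) => by
      rw [Finset.prod_range_succ, mul_comm _ ((m : ℝ) + 1 + r), mul_assoc, prod_asc m r,
        show m + (r + 1) = (m + r) + 1 from rfl, Nat.factorial_succ]
      push_cast
      ring

private lemma gamma_ge (M : ℕ) (hM : 2 ≤ M) {y : ℝ} (hy : (M : ℝ) + 1 < y) :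
    (M : ℝ) ^ (y - ((M : ℝ) + 1)) ≤ Real.Gamma y := by
  have hM0 : (0 : ℝ) < M := by exact_mod_cast Nat.lt_of_lt_of_le (by norm_num) hM
  have hx : (M : ℝ) ∈ Set.Ioi (0 : ℝ) := hM0
  have hz : y ∈ Set.Ioi (0 : ℝ) := by simp only [Set.mem_Ioi]; linarith
  have hslope := Real.convexOn_log_Gamma.slope_mono_adjacent hx hz
    (by linarith : (M : ℝ) < (M : ℝ) + 1) hy
  have hΓM : 0 < Real.Gamma (M : ℝ) := Real.Gamma_pos_of_pos hM0
  have hΓM1 : Real.Gamma ((M : ℝ) + 1) = M * Real.Gamma (M : ℝ) :=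
    Real.Gamma_add_one (ne_of_gt hM0)
  have hnum : (Real.log ∘ Real.Gamma) ((M : ℝ) + 1) - (Real.log ∘ Real.Gamma) (M : ℝ)
      = Real.log (M : ℝ) := by
    simp only [Function.comp_apply, hΓM1, Real.log_mul (ne_of_gt hM0) (ne_of_gt hΓM)]
    ring
  have hfM1 : 0 ≤ (Real.log ∘ Real.Gamma) ((M : ℝ) + 1) := by
    have : Real.Gamma ((M : ℝ) + 1) = (Nat.factorial M : ℝ) := Real.Gamma_nat_eq_factorial M
    simp only [Function.comp_apply, this]
    exact Real.log_nonneg (by exact_mod_cast Nat.one_le_iff_ne_zero.mpr (Nat.factorial_ne_zero M))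
  have hden : (0 : ℝ) < y - ((M : ℝ) + 1) := by linarith
  rw [hnum] at hslope
  have h2 : Real.log (M : ℝ) / 1 * (y - ((M : ℝ) + 1))
      ≤ (Real.log ∘ Real.Gamma) y - (Real.log ∘ Real.Gamma) ((M : ℝ) + 1) := by
    rw [show ((M : ℝ) + 1) - (M : ℝ) = 1 by ring] at hslope
    calc Real.log (M : ℝ) / 1 * (y - ((M : ℝ) + 1))
        ≤ ((Real.log ∘ Real.Gamma) y - (Real.log ∘ Real.Gamma) ((M : ℝ) + 1))
            / (y - ((M : ℝ) + 1)) * (y - ((M : ℝ) + 1)) := by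
          exact mul_le_mul_of_nonneg_right hslope hden.le
      _ = _ := by field_simp
  have h3 : Real.log (M : ℝ) * (y - ((M : ℝ) + 1)) ≤ Real.log (Real.Gamma y) := by
    simp only [Function.comp_apply] at h2 hfM1
    rw [div_one] at h2
    linarith
  have hΓy : 0 < Real.Gamma y := Real.Gamma_pos_of_pos (by exact hz)
  calc (M : ℝ) ^ (y - ((M : ℝ) + 1))
      = Real.exp (Real.log (M : ℝ) * (y - ((M : ℝ) + 1))) := Real.rpow_def_of_pos hM0 _
    _ ≤ Real.exp (Real.log (Real.Gamma y)) := Real.exp_le_exp.mpr h3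
    _ = Real.Gamma y := Real.exp_log hΓy

private lemma summable_pow_div_gamma {β : ℝ} (hβ : 0 < β) {a : ℝ} (ha : 0 ≤ a) :
    Summable (fun N : ℕ => a ^ N / Real.Gamma (β * N + 1)) := by
  have h1 : Filter.Tendsto (fun M : ℕ => (M : ℝ) ^ β) Filter.atTop Filter.atTop :=
    (tendsto_rpow_atTop hβ).comp tendsto_natCast_atTop_atTop
  obtain ⟨M, hM2, hMa⟩ : ∃ M : ℕ, 2 ≤ M ∧ 2 * a + 1 ≤ (M : ℝ) ^ β := by
    obtain ⟨M, hM⟩ := ((Filter.eventually_ge_atTop 2).and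
      (h1.eventually_ge_atTop (2 * a + 1))).exists
    exact ⟨M, hM.1, hM.2⟩
  have hM0 : (0 : ℝ) < M := by exact_mod_cast Nat.lt_of_lt_of_le (by norm_num) hM2
  set D : ℝ := (M : ℝ) ^ β with hD
  have hD0 : 0 < D := Real.rpow_pos_of_pos hM0 β
  set q : ℝ := a / D with hq
  have hq0 : 0 ≤ q := div_nonneg ha hD0.le
  have hq1 : q < 1 := by
    rw [hq, div_lt_one hD0]
    linarith
  set E : ℝ := (M : ℝ) ^ ((M : ℝ)) with hE
  have hE0 : 0 < E := Real.rpow_pos_of_pos hM0 _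
  set N₁ : ℕ := ⌈(M : ℝ) / β⌉₊ + 1 with hN₁
  rw [← summable_nat_add_iff N₁]
  have hsum : Summable (fun n : ℕ => E * q ^ n) :=
    (summable_geometric_of_lt_one hq0 hq1).mul_left E
  apply Summable.of_nonneg_of_le _ _ hsum
  · intro n
    have : 0 < Real.Gamma (β * ((n + N₁ : ℕ) : ℝ) + 1) :=
      Real.Gamma_pos_of_pos (by positivity)
    positivity
  · intro n
    set N : ℕ := n + N₁ with hNdef
    have hNge : ((M : ℝ) / β + 1) ≤ (N : ℝ) := by
      have h1 : (M : ℝ) / β ≤ ⌈(M : ℝ) / β⌉₊ := Nat.le_ceil _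
      have h2 : (N₁ : ℝ) ≤ (N : ℝ) := by exact_mod_cast Nat.le_add_left N₁ n
      have : ((N₁ : ℕ) : ℝ) = ⌈(M : ℝ) / β⌉₊ + 1 := by push_cast [hN₁]; ring
      linarith
    have hMN : (M : ℝ) + 1 < β * (N : ℝ) + 1 := by
      have : (M : ℝ) + β ≤ β * (N : ℝ) := by
        have := mul_le_mul_of_nonneg_left hNge hβ.le
        calc (M : ℝ) + β = β * ((M : ℝ) / β + 1) := by field_simp
          _ ≤ β * N := this
      linarith
    have hg := gamma_ge M hM2 hMN
    have hpow : (M : ℝ) ^ (β * (N : ℝ) + 1 - ((M : ℝ) + 1)) = D ^ N / E := by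
      rw [show β * (N : ℝ) + 1 - ((M : ℝ) + 1) = β * (N : ℝ) - (M : ℝ) by ring,
        Real.rpow_sub hM0, ← hE]
      congr 1
      rw [hD, ← Real.rpow_natCast ((M : ℝ) ^ β) N, ← Real.rpow_mul hM0.le]
    rw [hpow] at hg
    have hDE : 0 < D ^ N / E := by positivity
    calc a ^ N / Real.Gamma (β * (N : ℝ) + 1)
        ≤ a ^ N / (D ^ N / E) := by
          apply div_le_div_of_nonneg_left (by positivity) hDE hg
      _ = E * (a ^ N / D ^ N) := by field_simp
      _ = E * q ^ N := by rw [hq, div_pow]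
      _ = E * (q ^ n * q ^ N₁) := by rw [← pow_add]
      _ ≤ E * (q ^ n * 1) := by
          apply mul_le_mul_of_nonneg_left _ hE0.le
          exact mul_le_mul_of_nonneg_left (pow_le_one₀ hq0 hq1.le) (pow_nonneg hq0 n)
      _ = E * q ^ n := by ring

private def phi {k : ℕ} (y : Fin (k + 1) → ℕ) : (Fin k → ℕ) × ℕ :=
  (fun j => y j.succ, y 0)

private lemma phi_inj {k : ℕ} : Function.Injective (phi (k := k)) := by
  intro y y' h
  have h1 : y 0 = y' 0 := congrArg Prod.snd h
  have h2 : ∀ j : Fin k, y j.succ = y' j.succ :=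
    fun (j : Fin k) => congrFun (congrArg Prod.fst h) j
  funext i
  rcases Fin.eq_zero_or_eq_succ i with rfl | ⟨j, rfl⟩
  · exact h1
  · exact h2 j

private def fib (k N : ℕ) : Finset ((Fin k → ℕ) × ℕ) :=
  (Finset.piAntidiag (Finset.univ : Finset (Fin (k + 1))) N).image phi

private lemma mem_fib {k N : ℕ} {p : (Fin k → ℕ) × ℕ} :
    p ∈ fib k N ↔ p.2 + ∑ j, p.1 j = N := by
  constructor
  · intro hp
    rw [fib, Finset.mem_image] at hp
    obtain ⟨y, hy, rfl⟩ := hp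
    rw [Finset.mem_piAntidiag] at hy
    rw [← hy.1, Fin.sum_univ_succ]
    rfl
  · intro hp
    rw [fib, Finset.mem_image]
    refine ⟨Fin.cons p.2 p.1, ?_, ?_⟩
    · rw [Finset.mem_piAntidiag]
      refine ⟨?_, fun i _ => Finset.mem_univ i⟩
      rw [Fin.sum_univ_succ]
      simpa using hp
    · rw [phi]
      refine Prod.ext ?_ ?_
      · funext j; simp [Fin.cons_succ]
      · simp [Fin.cons_zero]

private lemma fib_sum {k : ℕ} (N : ℕ) (b0 : ℝ) (b : Fin k → ℝ) :
    ∑ p ∈ fib k N,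
        (b0 ^ p.2 * ∏ j, b j ^ p.1 j) * (Nat.factorial N : ℝ) /
          ((Nat.factorial p.2 : ℝ) * ∏ j, (Nat.factorial (p.1 j) : ℝ))
      = (b0 + ∑ j, b j) ^ N := by
  rw [fib, Finset.sum_image (fun y _ y' _ h => phi_inj h),
    show b0 + ∑ j, b j = ∑ i, Fin.cons (α := fun _ => ℝ) b0 b i from by
      rw [Fin.sum_univ_succ]; simp,
    Finset.sum_pow_eq_sum_piAntidiag]
  apply Finset.sum_congr rfl
  intro y hy
  rw [Finset.mem_piAntidiag] at hy
  have hsum : ∑ i, y i = N := hy.1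
  have hfac0 : ((Nat.factorial (y 0) : ℝ)) ≠ 0 := by positivity
  have hfacp : (∏ j : Fin k, (Nat.factorial (y j.succ) : ℝ)) ≠ 0 := by positivity
  have hspec := Nat.multinomial_spec (Finset.univ : Finset (Fin (k + 1))) y
  rw [hsum] at hspec
  have hcast : ((Nat.factorial (y 0) : ℝ) * ∏ j : Fin k, (Nat.factorial (y j.succ) : ℝ)) *
      (Nat.multinomial Finset.univ y : ℝ) = (Nat.factorial N : ℝ) := by
    have := congrArg (Nat.cast : ℕ → ℝ) hspec
    push_cast at this
    rw [Fin.prod_univ_succ] at this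
    exact this
  rw [Fin.prod_univ_succ]
  simp only [Fin.cons_zero, Fin.cons_succ, phi]
  rw [div_eq_iff (by exact mul_ne_zero hfac0 hfacp)]
  rw [← hcast]; ring

/-- Pgf of the generalized fractional counting process:
`E_{β,1}(-t^β ∑_j λ_j(1-u^j)) = ∑_n u^n ∑_{x∈Ω(k,n)} (∑_j x_j)!
  E_{β, β∑x_j+1}^{∑x_j+1}(-λt^β) ∏_j (λ_j t^β)^{x_j}/x_j!`. -/
theorem gfcp_pgf (β : ℝ) (hβ0 : 0 < β) (hβ1 : β ≤ 1)
    (k : ℕ) (lam : Fin k → ℝ) (hlam : ∀ j, 0 < lam j)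
    (t : ℝ) (ht : 0 ≤ t) (u : ℝ) (hu : |u| ≤ 1) :
    mittagLeffler β (-(t ^ β * ∑ j, lam j * (1 - u ^ (j.1 + 1)))) =
      ∑' n : ℕ, u ^ n *
        ∑' x : Fin k → ℕ,
          (if (∑ j, (j.1 + 1) * x j) = n then
            (Nat.factorial (∑ j, x j) : ℝ) *
              mittagLeffler3 β (β * (∑ j, x j) + 1) ((∑ j, x j) + 1)
                (-((∑ j, lam j) * t ^ β)) *
              ∏ j, (lam j * t ^ β) ^ (x j) / (Nat.factorial (x j) : ℝ)
          else 0) := by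
  classical
  set T : ℝ := t ^ β with hT
  have hT0 : 0 ≤ T := Real.rpow_nonneg ht β
  set w : ℝ := ∑ j, lam j * T with hw
  have hw0 : 0 ≤ w := Finset.sum_nonneg fun j _ => mul_nonneg (hlam j).le hT0
  set z : ℝ := -w + ∑ j, lam j * T * u ^ (j.1 + 1) with hz
  set G : (Fin k → ℕ) × ℕ → ℝ := fun p =>
    u ^ (∑ j, (j.1 + 1) * p.1 j) * (-w) ^ p.2 * (∏ j, (lam j * T) ^ p.1 j) *
      (Nat.factorial (p.2 + ∑ j, p.1 j) : ℝ) /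
      ((Nat.factorial p.2 : ℝ) * (∏ j, (Nat.factorial (p.1 j) : ℝ)) *
        Real.Gamma (β * ((p.2 + ∑ j, p.1 j : ℕ) : ℝ) + 1)) with hG
  set H : (Fin k → ℕ) × ℕ → ℝ := fun p =>
    w ^ p.2 * (∏ j, (lam j * T) ^ p.1 j) *
      (Nat.factorial (p.2 + ∑ j, p.1 j) : ℝ) /
      ((Nat.factorial p.2 : ℝ) * (∏ j, (Nat.factorial (p.1 j) : ℝ)) *
        Real.Gamma (β * ((p.2 + ∑ j, p.1 j : ℕ) : ℝ) + 1)) with hH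
  have hΓpos : ∀ N : ℕ, 0 < Real.Gamma (β * (N : ℝ) + 1) :=
    fun N => Real.Gamma_pos_of_pos (by positivity)
  have hH0 : ∀ p, 0 ≤ H p := by
    intro p
    rw [hH]
    apply div_nonneg
    · apply mul_nonneg
      apply mul_nonneg (pow_nonneg hw0 _)
      · exact Finset.prod_nonneg fun j _ => pow_nonneg (mul_nonneg (hlam j).le hT0) _
      · exact Nat.cast_nonneg _
    · apply mul_nonneg
      apply mul_nonneg (Nat.cast_nonneg _)
      · exact Finset.prod_nonneg fun j _ => Nat.cast_nonneg _
      · exact (hΓpos _).le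
  have hGH : ∀ p, |G p| ≤ H p := by
    intro p
    have hfac : G p = (u ^ (∑ j, (j.1 + 1) * p.1 j) * (-1 : ℝ) ^ p.2) * H p := by
      rw [hG, hH]
      simp only
      rw [neg_pow]
      ring
    rw [hfac, abs_mul, abs_of_nonneg (hH0 p)]
    apply mul_le_of_le_one_left (hH0 p)
    rw [abs_mul, abs_pow, abs_pow, abs_neg, abs_one, one_pow, mul_one]
    exact pow_le_one₀ (abs_nonneg u) hu
  have hHfib : ∀ N : ℕ, ∑ p ∈ fib k N, H p = (w + w) ^ N / Real.Gamma (β * N + 1) := by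
    intro N
    have h1 : ∀ p ∈ fib k N, H p =
        (w ^ p.2 * ∏ j, (lam j * T) ^ p.1 j) * (Nat.factorial N : ℝ) /
          ((Nat.factorial p.2 : ℝ) * ∏ j, (Nat.factorial (p.1 j) : ℝ)) *
          (Real.Gamma (β * (N : ℝ) + 1))⁻¹ := by
      intro p hp
      have hkey := mem_fib.mp hp
      rw [hH]
      simp only
      rw [hkey, ← div_div, div_eq_mul_inv]
    rw [Finset.sum_congr rfl h1, ← Finset.sum_mul, fib_sum N w (fun j => lam j * T), ← hw,
      div_eq_mul_inv]
  have hHsum : Summable H := by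
    have hCsum : Summable (fun N : ℕ => (w + w) ^ N / Real.Gamma (β * N + 1)) :=
      summable_pow_div_gamma hβ0 (by linarith)
    apply summable_of_sum_le (Pi.le_def.mpr hH0)
    intro s
    set N₀ : ℕ := (s.sup fun p => p.2 + ∑ j, p.1 j) + 1 with hN₀
    have hsub : s ⊆ (Finset.range N₀).biUnion (fib k) := by
      intro p hp
      rw [Finset.mem_biUnion]
      exact ⟨p.2 + ∑ j, p.1 j,
        Finset.mem_range.mpr (Nat.lt_succ_of_le
          (Finset.le_sup (f := fun p : (Fin k → ℕ) × ℕ => p.2 + ∑ j, p.1 j) hp)),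
        mem_fib.mpr rfl⟩
    have hdisj : (↑(Finset.range N₀) : Set ℕ).PairwiseDisjoint (fib k) := by
      intro N1 _ N2 _ hne
      refine Finset.disjoint_left.mpr ?_
      intro p h1 h2
      exact hne ((mem_fib.mp h1).symm.trans (mem_fib.mp h2))
    calc ∑ p ∈ s, H p
        ≤ ∑ p ∈ (Finset.range N₀).biUnion (fib k), H p :=
          Finset.sum_le_sum_of_subset_of_nonneg hsub fun p _ _ => hH0 p
      _ = ∑ N ∈ Finset.range N₀, ∑ p ∈ fib k N, H p := Finset.sum_biUnion hdisj
      _ = ∑ N ∈ Finset.range N₀, (w + w) ^ N / Real.Gamma (β * N + 1) :=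
          Finset.sum_congr rfl fun N _ => hHfib N
      _ ≤ ∑' N : ℕ, (w + w) ^ N / Real.Gamma (β * N + 1) :=
          Summable.sum_le_tsum _ (fun N _ => div_nonneg (pow_nonneg (by linarith) N) (hΓpos N).le) hCsum
  have hGsum : Summable G :=
    (Summable.of_nonneg_of_le (fun p => abs_nonneg _) hGH hHsum).of_abs
  have hGfib : ∀ N : ℕ, ∑ p ∈ fib k N, G p = z ^ N / Real.Gamma (β * N + 1) := by
    intro N
    have h1 : ∀ p ∈ fib k N, G p =
        ((-w) ^ p.2 * ∏ j, (lam j * T * u ^ (j.1 + 1)) ^ p.1 j) * (Nat.factorial N : ℝ) /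
          ((Nat.factorial p.2 : ℝ) * ∏ j, (Nat.factorial (p.1 j) : ℝ)) *
          (Real.Gamma (β * (N : ℝ) + 1))⁻¹ := by
      intro p hp
      have hkey := mem_fib.mp hp
      rw [hG]
      simp only
      rw [hkey]
      have hsplit : (∏ j, (lam j * T * u ^ (j.1 + 1)) ^ p.1 j)
          = (∏ j, (lam j * T) ^ p.1 j) * u ^ (∑ j, (j.1 + 1) * p.1 j) := by
        simp_rw [mul_pow, ← pow_mul]
        rw [Finset.prod_mul_distrib, Finset.prod_pow_eq_pow_sum]
      rw [hsplit]
      have hne1 : (Nat.factorial p.2 : ℝ) ≠ 0 := by positivity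
      have hne2 : (∏ j, (Nat.factorial (p.1 j) : ℝ)) ≠ 0 := by positivity
      have hne3 : Real.Gamma (β * (N : ℝ) + 1) ≠ 0 := (hΓpos N).ne'
      field_simp
      simp only [mul_comm T (lam _)]
    rw [Finset.sum_congr rfl h1, ← Finset.sum_mul,
      fib_sum N (-w) (fun j => lam j * T * u ^ (j.1 + 1)), ← hz, div_eq_mul_inv]
  have hLHS : mittagLeffler β (-(T * ∑ j, lam j * (1 - u ^ (j.1 + 1)))) = ∑' p, G p := by
    have harg : -(T * ∑ j, lam j * (1 - u ^ (j.1 + 1))) = z := by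
      have hterm : ∀ j : Fin k, T * (lam j * (1 - u ^ (j.1 + 1)))
          = lam j * T - lam j * T * u ^ (j.1 + 1) := fun j => by ring
      calc -(T * ∑ j, lam j * (1 - u ^ (j.1 + 1)))
          = -(∑ j, (lam j * T - lam j * T * u ^ (j.1 + 1))) := by
            rw [Finset.mul_sum]
            congr 1
            exact Finset.sum_congr rfl fun j _ => hterm j
        _ = -((∑ j, lam j * T) - ∑ j, lam j * T * u ^ (j.1 + 1)) := by
            rw [Finset.sum_sub_distrib]
        _ = z := by rw [hz, ← hw]; ring
    rw [harg]
    have hset : ∀ N : ℕ,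
        ((fun p : (Fin k → ℕ) × ℕ => p.2 + ∑ j, p.1 j) ⁻¹' {N} : Set _) = ↑(fib k N) := by
      intro N
      ext p
      simp only [Set.mem_preimage, Set.mem_singleton_iff, Finset.mem_coe]
      exact (mem_fib).symm
    have hfw := (hGsum.hasSum.tsum_fiberwise
      (fun p : (Fin k → ℕ) × ℕ => p.2 + ∑ j, p.1 j)).tsum_eq
    calc mittagLeffler β z = ∑' N : ℕ, z ^ N / Real.Gamma (β * N + 1) := rfl
      _ = ∑' N : ℕ, ∑ p ∈ fib k N, G p := tsum_congr fun N => (hGfib N).symm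
      _ = ∑' N : ℕ, ∑' (p : ((fun p : (Fin k → ℕ) × ℕ => p.2 + ∑ j, p.1 j) ⁻¹' {N})), G p :=
          tsum_congr fun N => by rw [hset N, Finset.tsum_subtype']
      _ = ∑' p, G p := hfw
  rw [hLHS]
  have hws : (∑ j, lam j) * T = w := by rw [hw, Finset.sum_mul]
  have hc' : ∀ x : Fin k → ℕ, (∑' r : ℕ, G (x, r)) =
      u ^ (∑ j, (j.1 + 1) * x j) *
        ((Nat.factorial (∑ j, x j) : ℝ) *
          mittagLeffler3 β (β * (∑ j, x j) + 1) ((∑ j, x j) + 1) (-((∑ j, lam j) * T)) *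
          ∏ j, (lam j * T) ^ (x j) / (Nat.factorial (x j) : ℝ)) := by
    intro x
    rw [mittagLeffler3]
    set m : ℕ := ∑ j, x j with hm
    have hmne : (Nat.factorial m : ℝ) ≠ 0 := by positivity
    have hterm : ∀ r : ℕ, G (x, r) =
        u ^ (∑ j, (j.1 + 1) * x j) *
          ((Nat.factorial m : ℝ) *
            ((∏ i ∈ Finset.range r, ((m : ℝ) + 1 + i)) * (-((∑ j, lam j) * T)) ^ r /
              ((Nat.factorial r : ℝ) * Real.Gamma (β * r + (β * m + 1)))) *
            ∏ j, (lam j * T) ^ (x j) / (Nat.factorial (x j) : ℝ)) := by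
      intro r
      rw [hG]
      simp only
      rw [hws]
      have hΓarg : β * ((r + m : ℕ) : ℝ) + 1 = β * r + (β * m + 1) := by push_cast; ring
      have hasc : (∏ i ∈ Finset.range r, ((m : ℝ) + 1 + i))
          = (Nat.factorial (r + m) : ℝ) / (Nat.factorial m : ℝ) := by
        rw [eq_div_iff hmne, Nat.add_comm r m]
        exact prod_asc m r
      rw [hΓarg, hasc, Finset.prod_div_distrib]
      have hne1 : (Nat.factorial r : ℝ) ≠ 0 := by positivity
      have hne2 : (∏ j, (Nat.factorial (x j) : ℝ)) ≠ 0 := by positivity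
      have hne3 : Real.Gamma (β * r + (β * m + 1)) ≠ 0 := by
        rw [← hΓarg]; exact (hΓpos (r + m)).ne'
      field_simp
      rw [hm]
      simp only [mul_comm T (lam _)]
      ring
    calc (∑' r : ℕ, G (x, r))
        = ∑' r : ℕ, u ^ (∑ j, (j.1 + 1) * x j) *
            ((Nat.factorial m : ℝ) *
              ((∏ i ∈ Finset.range r, ((m : ℝ) + 1 + i)) * (-((∑ j, lam j) * T)) ^ r /
                ((Nat.factorial r : ℝ) * Real.Gamma (β * r + (β * m + 1)))) *
              ∏ j, (lam j * T) ^ (x j) / (Nat.factorial (x j) : ℝ)) := tsum_congr hterm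
      _ = u ^ (∑ j, (j.1 + 1) * x j) * ∑' r : ℕ,
            ((Nat.factorial m : ℝ) *
              ((∏ i ∈ Finset.range r, ((m : ℝ) + 1 + i)) * (-((∑ j, lam j) * T)) ^ r /
                ((Nat.factorial r : ℝ) * Real.Gamma (β * r + (β * m + 1)))) *
              ∏ j, (lam j * T) ^ (x j) / (Nat.factorial (x j) : ℝ)) := tsum_mul_left
      _ = u ^ (∑ j, (j.1 + 1) * x j) * ((∑' r : ℕ,
            (Nat.factorial m : ℝ) *
              ((∏ i ∈ Finset.range r, ((m : ℝ) + 1 + i)) * (-((∑ j, lam j) * T)) ^ r /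
                ((Nat.factorial r : ℝ) * Real.Gamma (β * r + (β * m + 1))))) *
              ∏ j, (lam j * T) ^ (x j) / (Nat.factorial (x j) : ℝ)) := by rw [tsum_mul_right]
      _ = u ^ (∑ j, (j.1 + 1) * x j) * ((Nat.factorial m : ℝ) * (∑' r : ℕ,
            (∏ i ∈ Finset.range r, ((m : ℝ) + 1 + i)) * (-((∑ j, lam j) * T)) ^ r /
                ((Nat.factorial r : ℝ) * Real.Gamma (β * r + (β * m + 1)))) *
              ∏ j, (lam j * T) ^ (x j) / (Nat.factorial (x j) : ℝ)) := by rw [tsum_mul_left]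
  have hcsum : Summable fun x : Fin k → ℕ => ∑' r : ℕ, G (x, r) := hGsum.prod
  set F : ℕ × (Fin k → ℕ) → ℝ := fun q =>
    if (∑ j, (j.1 + 1) * q.2 j) = q.1 then ∑' r : ℕ, G (q.2, r) else 0 with hF
  set ι : (Fin k → ℕ) → ℕ × (Fin k → ℕ) := fun x => ((∑ j, (j.1 + 1) * x j), x) with hι'
  have hι : Function.Injective ι := fun x y h => congrArg Prod.snd h
  have hsupp : Function.support F ⊆ Set.range ι := by
    intro q hq
    rw [Function.mem_support, hF] at hq
    simp only at hq
    by_cases hcond : (∑ j, (j.1 + 1) * q.2 j) = q.1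
    · exact ⟨q.2, by rw [hι']; simp only; rw [hcond]⟩
    · exact absurd (if_neg hcond) hq
  have hsupp' : ∀ q ∉ Set.range ι, F q = 0 := by
    intro q hq
    by_contra hne
    exact hq (hsupp hne)
  have hFι : ∀ x : Fin k → ℕ, F (ι x) = ∑' r : ℕ, G (x, r) := by
    intro x
    simp [hF, hι']
  have hFsum : Summable F := by
    apply (hι.summable_iff hsupp').mp
    have : F ∘ ι = fun x : Fin k → ℕ => ∑' r : ℕ, G (x, r) := funext hFι
    rw [this]
    exact hcsum
  calc (∑' p, G p)
      = ∑' (x : Fin k → ℕ) (r : ℕ), G (x, r) := Summable.tsum_prod hGsum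
    _ = ∑' x : Fin k → ℕ, F (ι x) := tsum_congr fun x => (hFι x).symm
    _ = ∑' q, F q := hι.tsum_eq hsupp
    _ = ∑' (n : ℕ) (x : Fin k → ℕ), F (n, x) := Summable.tsum_prod hFsum
    _ = _ := by
        apply tsum_congr
        intro n
        rw [← tsum_mul_left]
        apply tsum_congr
        intro x
        rw [hF]
        simp only
        rw [mul_ite, mul_zero]
        split_ifs with hcond
        · rw [hc' x, hcond]
        · rfl
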